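/- In Borda voting with m alternatives, if the anchoring point w ∈ Δ_m satisfies w_a ≥ (m−1)·w_{[2]} + Σ_{i=3}^{m} w_{[i]}·(m − 2i + 2), where a is the alternative with the largest weight and w_{[i]} is the i-th largest component of w, then every ranking (permutation score vector) placing a first has ⟨w, r⟩ at least as large as every ranking not placing a first. Equivalently, min over rankings ranking a first of ⟨w,r⟩ ≥ max over rankings not ranking a first of ⟨w,r⟩. -/

import Mathlib

private def revPerm (m : ℕ) : Equiv.Perm (Fin m) where
  toFun j := ⟨(m - (j : ℕ)) % m, Nat.mod_lt _ (Nat.pos_of_ne_zero (by have := j.isLt; omega))⟩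
  invFun j := ⟨(m - (j : ℕ)) % m, Nat.mod_lt _ (Nat.pos_of_ne_zero (by have := j.isLt; omega))⟩
  left_inv j := by
    have hj := j.isLt
    apply Fin.ext
    simp only
    rcases Nat.eq_zero_or_pos (j : ℕ) with h | h
    · simp [h, Nat.mod_self]
    · rw [Nat.mod_eq_of_lt (show m - (j:ℕ) < m by omega), Nat.mod_eq_of_lt (by omega)]
      omega
  right_inv j := by
    have hj := j.isLt
    apply Fin.ext
    simp only
    rcases Nat.eq_zero_or_pos (j : ℕ) with h | h
    · simp [h, Nat.mod_self]
    · rw [Nat.mod_eq_of_lt (show m - (j:ℕ) < m by omega), Nat.mod_eq_of_lt (by omega)]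
      omega

private lemma borda_key {m : ℕ} (hm : 3 ≤ m) (f : Fin m → ℝ) (hf : Antitone f)
    {z o : Fin m} (hzval : (z : ℕ) = 0) (hoval : (o : ℕ) = 1)
    (hcond : (m - 1 : ℝ) * f o
        + ∑ i ∈ Finset.univ.filter (fun i : Fin m => 2 ≤ (i : ℕ)),
            f i * ((m : ℝ) - 2 * (i : ℕ)) ≤ f z)
    (π π' : Equiv.Perm (Fin m)) (hπ : ((π z : Fin m) : ℕ) = 0) (hπ' : ((π' z : Fin m) : ℕ) ≠ 0) :
    ∑ j, f j * ((π j : ℕ) : ℝ) ≤ ∑ j, f j * ((π' j : ℕ) : ℝ) := by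
  set A : Finset (Fin m) := Finset.univ.filter (fun i : Fin m => 2 ≤ (i : ℕ)) with hA
  set s : Finset (Fin m) := Finset.univ.erase z with hs
  set ρ : Equiv.Perm (Fin m) := revPerm m with hρ
  have hoz : o ≠ z := by
    intro h; rw [h, hzval] at hoval; omega
  have hρz : ρ z = z := by
    apply Fin.ext
    show (m - (z : ℕ)) % m = (z : ℕ)
    rw [hzval, Nat.sub_zero, Nat.mod_self]
  have hρval : ∀ j : Fin m, j ≠ z → ((ρ j : Fin m) : ℕ) = m - (j : ℕ) := by
    intro j hj
    have hj0 : (j : ℕ) ≠ 0 := fun h => hj (Fin.ext (by rw [h, hzval]))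
    have := j.isLt
    show (m - (j : ℕ)) % m = m - (j : ℕ)
    exact Nat.mod_eq_of_lt (by omega)
  set g : Fin m → ℝ := fun j => (((ρ j : Fin m) : ℕ) : ℝ) with hg
  have hπz : π z = z := Fin.ext (by rw [hπ, hzval])
  -- split of sums over univ into z, o, A
  have hsplit : ∀ F : Fin m → ℝ, ∑ j, F j = F z + F o + ∑ j ∈ A, F j := by
    intro F
    have h1 := Finset.sum_filter_add_sum_filter_not Finset.univ
      (fun j : Fin m => 2 ≤ (j : ℕ)) F
    have h2 : Finset.univ.filter (fun j : Fin m => ¬ 2 ≤ (j : ℕ)) = {z, o} := by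
      ext j
      simp only [Finset.mem_filter, Finset.mem_univ, true_and, Finset.mem_insert,
        Finset.mem_singleton, Fin.ext_iff, hzval, hoval]
      omega
    rw [h2, Finset.sum_pair (fun h => hoz h.symm)] at h1
    rw [← h1, ← hA]; ring
  -- upper bound: sum f*pi <= sum f*g
  have hub : ∑ j, f j * ((π j : ℕ) : ℝ) ≤ ∑ j, f j * g j := by
    set μ : Equiv.Perm (Fin m) := π.trans ρ.symm with hμ
    have hgμ : ∀ j, g (μ j) = ((π j : ℕ) : ℝ) := by
      intro j
      simp only [hg, hμ, Equiv.trans_apply, Equiv.apply_symm_apply]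
    have hμz : μ z = z := by
      show ρ.symm (π z) = z
      rw [hπz, Equiv.symm_apply_eq]
      exact hρz.symm
    have hmono : MonovaryOn f g ↑s := by
      intro i hi j hj hij
      have hi' : i ≠ z := (Finset.mem_erase.1 (Finset.mem_coe.1 hi)).1
      have hj' : j ≠ z := (Finset.mem_erase.1 (Finset.mem_coe.1 hj)).1
      have hij0 : (((ρ i : Fin m) : ℕ) : ℝ) < (((ρ j : Fin m) : ℕ) : ℝ) := hij
      have hij' : ((ρ i : Fin m) : ℕ) < ((ρ j : Fin m) : ℕ) := by exact_mod_cast hij0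
      rw [hρval i hi', hρval j hj'] at hij'
      have hi2 := i.isLt
      have hj2 := j.isLt
      exact hf (by rw [Fin.le_def]; omega)
    have hsub : {x | μ x ≠ x} ⊆ ↑s := by
      intro x hx
      simp only [Set.mem_setOf_eq] at hx
      refine Finset.mem_coe.2 (Finset.mem_erase.2 ⟨?_, Finset.mem_univ x⟩)
      intro h
      exact hx (by rw [h, hμz])
    have H := hmono.sum_smul_comp_perm_le_sum_smul hsub
    simp only [smul_eq_mul, hs] at H
    have e1 : ∑ j, f j * ((π j : ℕ) : ℝ) = ∑ j, f j * g (μ j) :=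
      (Finset.sum_congr rfl fun j _ => by rw [hgμ]).symm
    have e2 := Finset.add_sum_erase Finset.univ (fun j => f j * g (μ j)) (Finset.mem_univ z)
    have e3 := Finset.add_sum_erase Finset.univ (fun j => f j * g j) (Finset.mem_univ z)
    rw [e1, ← e2, ← e3, hμz]
    exact add_le_add_right H _
  -- middle inequality, using hcond
  have hmid : ∑ j, f j * g j ≤ (∑ j, f j * ((j : ℕ) : ℝ)) + (f z - f o) := by
    have hgz : g z = 0 := by
      show (((ρ z : Fin m) : ℕ) : ℝ) = 0
      rw [hρz, hzval]
      norm_num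
    have hgo : g o = (m : ℝ) - 1 := by
      show (((ρ o : Fin m) : ℕ) : ℝ) = (m : ℝ) - 1
      rw [hρval o hoz, hoval, Nat.cast_sub (by omega : 1 ≤ m)]
      norm_num
    have e2 : ∑ j ∈ A, f j * g j - ∑ j ∈ A, f j * ((j : ℕ) : ℝ)
        = ∑ j ∈ A, f j * ((m : ℝ) - 2 * (j : ℕ)) := by
      rw [← Finset.sum_sub_distrib]
      refine Finset.sum_congr rfl fun j hj => ?_
      rw [hA, Finset.mem_filter] at hj
      have hj2 : 2 ≤ (j : ℕ) := hj.2
      have hjz : j ≠ z := fun h => by rw [h, hzval] at hj2; omega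
      have hgj : g j = (m : ℝ) - (j : ℕ) := by
        show (((ρ j : Fin m) : ℕ) : ℝ) = _
        rw [hρval j hjz, Nat.cast_sub (le_of_lt j.isLt)]
      rw [hgj]
      ring
    rw [hsplit (fun j => f j * g j), hsplit (fun j => f j * ((j : ℕ) : ℝ))]
    rw [hgz, hgo, hzval, hoval]
    push_cast
    linarith [hcond, e2]
  -- lower bound: sum f*id + (f z - f o) <= sum f*pi'
  have hlb : (∑ j, f j * ((j : ℕ) : ℝ)) + (f z - f o) ≤ ∑ j, f j * ((π' j : ℕ) : ℝ) := by
    set c : Fin m := π' z with hc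
    set b : Fin m := π'.symm z with hb
    have hcz : (c : ℕ) ≠ 0 := hπ'
    have hbz : b ≠ z := by
      intro h
      apply hπ'
      have h2 : π' z = z := by
        conv_lhs => rw [← h]
        rw [hb, Equiv.apply_symm_apply]
      rw [hc, h2, hzval]
    have hzb : z ≠ b := fun h => hbz h.symm
    set ν : Equiv.Perm (Fin m) := π'.trans (Equiv.swap c z) with hν
    have hνz : ν z = z := by
      show Equiv.swap c z (π' z) = z
      rw [← hc, Equiv.swap_apply_left]
    have hνb : ν b = c := by
      show Equiv.swap c z (π' b) = c
      rw [hb, Equiv.apply_symm_apply, Equiv.swap_apply_right]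
    have hνother : ∀ j, j ≠ z → j ≠ b → ν j = π' j := by
      intro j h1 h2
      show Equiv.swap c z (π' j) = π' j
      apply Equiv.swap_apply_of_ne_of_ne
      · rw [hc]
        exact fun h => h1 (π'.injective h)
      · intro h
        apply h2
        rw [hb, ← h, Equiv.symm_apply_apply]
    have hA' : ∑ j, f j * ((π' j : ℕ) : ℝ) - ∑ j, f j * ((ν j : ℕ) : ℝ)
        = ((c : ℕ) : ℝ) * (f z - f b) := by
      rw [← Finset.sum_sub_distrib]
      have hvan : ∀ x ∈ Finset.univ, x ∉ ({z, b} : Finset (Fin m)) →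
          f x * ((π' x : ℕ) : ℝ) - f x * ((ν x : ℕ) : ℝ) = 0 := by
        intro x _ hx
        simp only [Finset.mem_insert, Finset.mem_singleton, not_or] at hx
        rw [hνother x hx.1 hx.2]
        ring
      rw [← Finset.sum_subset (Finset.subset_univ _) hvan, Finset.sum_pair hzb]
      have h2 : π' b = z := by rw [hb, Equiv.apply_symm_apply]
      rw [← hc, h2, hνz, hνb, hzval]
      push_cast
      ring
    have hanti : AntivaryOn f (fun j : Fin m => ((j : ℕ) : ℝ))
        ↑(Finset.univ : Finset (Fin m)) := by
      intro i _ j _ hij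
      refine hf ?_
      rw [Fin.le_def]
      have hij0 : (((i : ℕ) : ℝ)) < ((j : ℕ) : ℝ) := hij
      have : (i : ℕ) < (j : ℕ) := by exact_mod_cast hij0
      omega
    have hB := hanti.sum_smul_le_sum_smul_comp_perm (σ := ν)
      (fun x _ => Finset.mem_coe.2 (Finset.mem_univ x))
    simp only [smul_eq_mul] at hB
    have hbval : (b : ℕ) ≠ 0 := fun h => hbz (Fin.ext (by rw [h, hzval]))
    have hfb1 : f b ≤ f o := hf (by rw [Fin.le_def, hoval]; omega)
    have hfzb : 0 ≤ f z - f b := by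
      have hzleb : z ≤ b := by
        rw [Fin.le_def, hzval]
        exact Nat.zero_le _
      linarith [hf hzleb]
    have hc1 : (1 : ℝ) ≤ ((c : ℕ) : ℝ) := by
      exact_mod_cast Nat.one_le_iff_ne_zero.2 hcz
    have hmul := le_mul_of_one_le_left hfzb hc1
    linarith [hB, hA', hfb1, hmul]
  linarith [hub, hmid, hlb]

/-- If the anchoring point `w` favors `a` strongly enough, every Borda report ranking
`a` first is at least as aligned with `w` as every report not ranking `a` first.
Here `σ i` is the rank of alternative `i` (rank `0` is first), so the Borda score of
`i` is `m - 1 - σ i`, and `τ` sorts `w` in decreasing order (`w (τ i)` is the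
`(i+1)`-st largest component of `w`). -/
theorem borda_top_reports_most_aligned (m : ℕ) (hm : 3 ≤ m)
    (w : Fin m → ℝ) (hw0 : ∀ i, 0 ≤ w i) (hw1 : ∑ i, w i = 1)
    (τ : Equiv.Perm (Fin m)) (hτ : Antitone fun i => w (τ i))
    (a : Fin m) (ha : a = τ ⟨0, by omega⟩)
    (hcond : w a ≥ (m - 1 : ℝ) * w (τ ⟨1, by omega⟩)
        + ∑ i ∈ Finset.univ.filter (fun i : Fin m => 2 ≤ (i : ℕ)),
            w (τ i) * ((m : ℝ) - 2 * (i : ℕ))) :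
    ∀ σ σ' : Equiv.Perm (Fin m), (σ a : ℕ) = 0 → (σ' a : ℕ) ≠ 0 →
      ∑ i, w i * ((m : ℝ) - 1 - (σ' i : ℕ)) ≤ ∑ i, w i * ((m : ℝ) - 1 - (σ i : ℕ)) := by
  intro σ σ' hσ hσ'
  have hzm : (0 : ℕ) < m := by omega
  have h1m : (1 : ℕ) < m := by omega
  have ha' : a = τ ⟨0, hzm⟩ := ha
  have hcond' : (m - 1 : ℝ) * (fun j => w (τ j)) (⟨1, h1m⟩ : Fin m)
      + ∑ i ∈ Finset.univ.filter (fun i : Fin m => 2 ≤ (i : ℕ)),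
          (fun j => w (τ j)) i * ((m : ℝ) - 2 * (i : ℕ)) ≤ (fun j => w (τ j)) (⟨0, hzm⟩ : Fin m) := by
    simp only
    rw [← ha']
    exact hcond
  have hπ : (((τ.trans σ) ⟨0, hzm⟩ : Fin m) : ℕ) = 0 := by
    rw [Equiv.trans_apply, ← ha']; exact hσ
  have hπ' : (((τ.trans σ') ⟨0, hzm⟩ : Fin m) : ℕ) ≠ 0 := by
    rw [Equiv.trans_apply, ← ha']; exact hσ'
  have key := borda_key hm (fun j => w (τ j)) hτ rfl rfl hcond'
    (τ.trans σ) (τ.trans σ') hπ hπ'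
  have reindex : ∀ (e : Equiv.Perm (Fin m)),
      ∑ i, w i * ((m : ℝ) - 1 - ((e i : ℕ) : ℝ))
        = ∑ j, w (τ j) * ((m : ℝ) - 1 - (((τ.trans e) j : ℕ) : ℝ)) := fun e =>
    (Equiv.sum_comp τ (fun i => w i * ((m : ℝ) - 1 - ((e i : ℕ) : ℝ)))).symm
  rw [reindex σ, reindex σ']
  have expand : ∀ (p : Equiv.Perm (Fin m)),
      ∑ j, w (τ j) * ((m : ℝ) - 1 - ((p j : ℕ) : ℝ))
        = ((m : ℝ) - 1) * ∑ j, w (τ j) - ∑ j, w (τ j) * ((p j : ℕ) : ℝ) := by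
    intro p
    rw [Finset.mul_sum, ← Finset.sum_sub_distrib]
    exact Finset.sum_congr rfl fun j _ => by ring
  rw [expand, expand]
  linarith [key]
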